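/- Let {(bᵢ, dᵢ)}_{i ∈ s} and {(bᵢ', dᵢ')}_{i ∈ s} be two finite families of pairs of real numbers indexed by the same finite set s, with bᵢ ≤ dᵢ and bᵢ' ≤ dᵢ' for every i, and suppose ε ≥ 0 satisfies |bᵢ - bᵢ'| ≤ ε and |dᵢ - dᵢ'| ≤ ε for every i ∈ s. Let λ₁ and λ₁' be the corresponding first landscape functions, λ₁(t) = max over i ∈ s of max(min(t - bᵢ, dᵢ - t), 0), and similarly for λ₁' (each taken to be 0 if s is empty). Then for every t ∈ ℝ, |λ₁(t) - λ₁'(t)| ≤ ε. -/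

import Mathlib

lemma fold_max_le_aux {ι : Type*} (s : Finset ι) (f g : ι → ℝ) (ε : ℝ) (hε : 0 ≤ ε)
    (h : ∀ i ∈ s, f i ≤ g i + ε) :
    s.fold max 0 f ≤ s.fold max 0 g + ε := by
  classical
  induction s using Finset.induction with
  | empty => simpa using hε
  | insert _ _ hx ih =>
    rename_i a s'
    rw [Finset.fold_insert hx, Finset.fold_insert hx]
    have h1 := h a (Finset.mem_insert_self a s')
    have h2 := ih (fun i hi => h i (Finset.mem_insert_of_mem hi))
    rw [max_le_iff]
    exact ⟨h1.trans (by gcongr; exact le_max_left _ _),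
      h2.trans (by gcongr; exact le_max_right _ _)⟩

/-- Given two finite families `{(bᵢ, dᵢ)}` and `{(bᵢ', dᵢ')}` over the same finite
index set `s`, with `bᵢ ≤ dᵢ`, `bᵢ' ≤ dᵢ'`, and `|bᵢ - bᵢ'| ≤ ε`, `|dᵢ - dᵢ'| ≤ ε`
for all `i ∈ s` (where `ε ≥ 0`), the corresponding first landscape functions
(taken to be `0` when `s` is empty) satisfy `|λ₁(t) - λ₁'(t)| ≤ ε` for every `t`. -/
theorem stmt_7 {ι : Type*} (s : Finset ι) (b d b' d' : ι → ℝ) (ε : ℝ) (hε : 0 ≤ ε)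
    (hbd : ∀ i ∈ s, b i ≤ d i) (hbd' : ∀ i ∈ s, b' i ≤ d' i)
    (hb : ∀ i ∈ s, |b i - b' i| ≤ ε) (hd : ∀ i ∈ s, |d i - d' i| ≤ ε) (t : ℝ) :
    |(s.fold max 0 fun i => max (min (t - b i) (d i - t)) 0)
      - (s.fold max 0 fun i => max (min (t - b' i) (d' i - t)) 0)| ≤ ε := by
  have key : ∀ i ∈ s,
      |max (min (t - b i) (d i - t)) 0 - max (min (t - b' i) (d' i - t)) 0| ≤ ε := by
    intro i hi
    have h1 : |min (t - b i) (d i - t) - min (t - b' i) (d' i - t)| ≤ ε := by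
      refine (abs_min_sub_min_le_max _ _ _ _).trans (max_le ?_ ?_)
      · have := hb i hi
        rw [abs_sub_comm] at this
        calc |t - b i - (t - b' i)| = |b' i - b i| := by ring_nf
          _ ≤ ε := this
      · calc |d i - t - (d' i - t)| = |d i - d' i| := by ring_nf
          _ ≤ ε := hd i hi
    refine (abs_max_sub_max_le_max _ _ _ _).trans (max_le h1 (by simpa using hε))
  rw [abs_sub_le_iff]
  constructor <;> rw [sub_le_iff_le_add, add_comm]
  · exact fold_max_le_aux s _ _ ε hε fun i hi => by
      have := (abs_sub_le_iff.mp (key i hi)).1; linarith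
  · exact fold_max_le_aux s _ _ ε hε fun i hi => by
      have := (abs_sub_le_iff.mp (key i hi)).2; linarith
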